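/- (Two-variable Schur complement identity implied by outer factorization.) Let K = {0,…,n₁}×{0,…,n₂} and Q(z) = Σ_{k∈K-K} Q_k z^k ≥ 0 on 𝕋², with T_Q the associated positive Toeplitz operator on H²_H(𝔻²). Suppose Q(z) = P(z)*P(z) on 𝕋² where P(z) = Σ_{k∈K} P_k z^k satisfies the range conditions ran(Π_{ℕ₀²∖K̃} T_P Π_{K̃}) ⊆ closure(ran Π_{ℕ₀²∖K̃} T_P Π_{ℕ₀²∖K̃}) for K̃ ∈ {{0,…,n₁-1}×{0,…,n₂-1}, {0,…,n₁}×{0,…,n₂-1}, {0,…,n₁-1}×{0,…,n₂}, K∖{(n₁,n₂)}, K}. Then S(T_Q; K∖{(n₁,n₂)}) = S₁ + S₂ - S₀, where S₁ = S(T_Q; {0,…,n₁-1}×{0,…,n₂}), S₂ = S(T_Q; {0,…,n₁}×{0,…,n₂-1}), S₀ = S(T_Q; {0,…,n₁-1}×{0,…,n₂-1}). -/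

import Mathlib

open scoped InnerProductSpace
open ContinuousLinearMap

section

variable {H : Type*} [NormedAddCommGroup H] [InnerProductSpace ℂ H] [CompleteSpace H]

/-- The square box `{0,…,N-1} × {0,…,N-1}` in `ℕ²`. -/
def box2 (N : ℕ) : Finset (ℕ × ℕ) := Finset.range N ×ˢ Finset.range N

/-- The quadratic form of the two-variable block Toeplitz matrix
`(Q_{i-j})_{i,j ∈ ℕ²}` on vectors supported in `box2 N`. -/
noncomputable def toepQF2 (Q : ℤ × ℤ → H →L[ℂ] H) (N : ℕ) (v : ℕ × ℕ → H) : ℝ :=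
  ∑ i ∈ box2 N, ∑ j ∈ box2 N,
    (⟪Q ((i.1 : ℤ) - (j.1 : ℤ), (i.2 : ℤ) - (j.2 : ℤ)) (v j), v i⟫_ℂ).re

/-- The two-variable block Toeplitz operator `T_Q` is (hermitian and) positive
semidefinite. -/
def ToepPos2 (Q : ℤ × ℤ → H →L[ℂ] H) : Prop :=
  (∀ k : ℤ × ℤ, Q (-k) = (Q k).adjoint) ∧ ∀ N v, 0 ≤ toepQF2 Q N v

/-- The quadratic form of a block matrix supported on `Λ × Λ`. -/
noncomputable def schurQF2 (Λ : Finset (ℕ × ℕ)) (S : ℕ × ℕ → ℕ × ℕ → H →L[ℂ] H) (v : ℕ × ℕ → H) : ℝ :=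
  ∑ i ∈ Λ, ∑ j ∈ Λ, (⟪S i j (v j), v i⟫_ℂ).re

/-- `S` is the Schur complement of the positive two-variable Toeplitz operator `T_Q`
supported on rows and columns in `Λ`: the maximal positive operator matrix supported
there with `T_Q - S ≥ 0`. -/
def IsSchurToep2 (Q : ℤ × ℤ → H →L[ℂ] H) (Λ : Finset (ℕ × ℕ))
    (S : ℕ × ℕ → ℕ × ℕ → H →L[ℂ] H) : Prop :=
  (∀ i j, i ∉ Λ ∨ j ∉ Λ → S i j = 0) ∧ (∀ i j, (S i j).adjoint = S j i) ∧
    (∀ v, 0 ≤ schurQF2 Λ S v) ∧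
    (∀ (N : ℕ) (v : ℕ × ℕ → H), (∀ p, p ∉ box2 N → v p = 0) →
      schurQF2 Λ S v ≤ toepQF2 Q N v) ∧
    ∀ X : ℕ × ℕ → ℕ × ℕ → H →L[ℂ] H, (∀ i j, i ∉ Λ ∨ j ∉ Λ → X i j = 0) →
      (∀ i j, (X i j).adjoint = X j i) → (∀ v, 0 ≤ schurQF2 Λ X v) →
      (∀ (N : ℕ) (v : ℕ × ℕ → H), (∀ p, p ∉ box2 N → v p = 0) →
        schurQF2 Λ X v ≤ toepQF2 Q N v) →
      ∀ v, schurQF2 Λ X v ≤ schurQF2 Λ S v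

/-- The Toeplitz matrix `T_P = (P_{i-j})` applied to a vector supported on `Λ`. -/
def toepApply2 (P : ℤ × ℤ → H →L[ℂ] H) (Λ : Finset (ℕ × ℕ)) (v : ℕ × ℕ → H)
    (i : ℕ × ℕ) : H :=
  ∑ j ∈ Λ, P ((i.1 : ℤ) - (j.1 : ℤ), (i.2 : ℤ) - (j.2 : ℤ)) (v j)

/-- The range condition
`ran (Π_{ℕ₀²∖Λ} T_P Π_Λ) ⊆ closure (ran (Π_{ℕ₀²∖Λ} T_P Π_{ℕ₀²∖Λ}))`, expressed by
`ℓ²`-approximation. -/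
def OuterCond2 (P : ℤ × ℤ → H →L[ℂ] H) (Λ : Finset (ℕ × ℕ)) : Prop :=
  ∀ v : ℕ × ℕ → H, (∀ p, p ∉ Λ → v p = 0) → ∀ ε > 0,
    ∃ (N : ℕ) (g : ℕ × ℕ → H), (∀ p, p ∈ Λ ∨ p ∉ box2 N → g p = 0) ∧
      (∑' i : ℕ × ℕ, if i ∈ Λ then (0 : ℝ)
        else ‖toepApply2 P Λ v i - toepApply2 P (box2 N) g i‖ ^ 2) < ε

/-! ### Auxiliary development -/

set_option linter.unusedSectionVars false in
lemma mem_box2 {p : ℕ × ℕ} {N : ℕ} : p ∈ box2 N ↔ p.1 < N ∧ p.2 < N := by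
  simp [box2]

/-- `P_{k-j}` as an operator, for `k j : ℕ × ℕ`. -/
def Pd (P : ℤ × ℤ → H →L[ℂ] H) (k j : ℕ × ℕ) : H →L[ℂ] H :=
  P ((k.1 : ℤ) - (j.1 : ℤ), (k.2 : ℤ) - (j.2 : ℤ))

set_option linter.unusedSectionVars false in
lemma toepApply2_def (P : ℤ × ℤ → H →L[ℂ] H) (Λ : Finset (ℕ × ℕ)) (v : ℕ × ℕ → H)
    (k : ℕ × ℕ) : toepApply2 P Λ v k = ∑ j ∈ Λ, Pd P k j (v j) := rfl

/-- A downward closed (= lower) subset of `ℕ²`. -/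
def DownClosed (Λ : Finset (ℕ × ℕ)) : Prop :=
  ∀ p ∈ Λ, ∀ q : ℕ × ℕ, q.1 ≤ p.1 → q.2 ≤ p.2 → q ∈ Λ

set_option linter.unusedSectionVars false in
lemma Pd_eq_zero {n₁ n₂ : ℕ} {P : ℤ × ℤ → H →L[ℂ] H}
    (hPsupp : ∀ a : ℤ × ℤ,
      ¬(0 ≤ a.1 ∧ a.1 ≤ (n₁ : ℤ) ∧ 0 ≤ a.2 ∧ a.2 ≤ (n₂ : ℤ)) → P a = 0)
    {k j : ℕ × ℕ}
    (h : ¬(j.1 ≤ k.1 ∧ k.1 ≤ j.1 + n₁ ∧ j.2 ≤ k.2 ∧ k.2 ≤ j.2 + n₂)) :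
    Pd P k j = 0 := by
  apply hPsupp
  rintro ⟨h1, h2, h3, h4⟩
  exact h (by constructor <;> [omega; constructor <;> [omega; constructor <;> omega]])

set_option linter.unusedSectionVars false in
lemma norm_sum_sq {ι : Type*} (Λ : Finset ι) (f : ι → H) :
    ‖∑ j ∈ Λ, f j‖ ^ 2 = ∑ i ∈ Λ, ∑ j ∈ Λ, (⟪f j, f i⟫_ℂ).re := by
  have h : (⟪∑ j ∈ Λ, f j, ∑ j ∈ Λ, f j⟫_ℂ) = ∑ i ∈ Λ, ∑ j ∈ Λ, ⟪f j, f i⟫_ℂ := by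
    rw [inner_sum]
    exact Finset.sum_congr rfl fun i _ => sum_inner Λ f (f i)
  calc ‖∑ j ∈ Λ, f j‖ ^ 2 = (⟪∑ j ∈ Λ, f j, ∑ j ∈ Λ, f j⟫_ℂ).re := by
        rw [← RCLike.re_to_complex]; exact (inner_self_eq_norm_sq _).symm
    _ = ∑ i ∈ Λ, ∑ j ∈ Λ, (⟪f j, f i⟫_ℂ).re := by
        rw [h, Complex.re_sum]
        exact Finset.sum_congr rfl fun i _ => Complex.re_sum _ _

lemma toepQF_expand (n₁ n₂ : ℕ) (Q P : ℤ × ℤ → H →L[ℂ] H)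
    (hPsupp : ∀ a : ℤ × ℤ,
      ¬(0 ≤ a.1 ∧ a.1 ≤ (n₁ : ℤ) ∧ 0 ≤ a.2 ∧ a.2 ≤ (n₂ : ℤ)) → P a = 0)
    (hfact : ∀ d : ℤ × ℤ,
      Q d = ∑ a ∈ Finset.range (n₁ + 1) ×ˢ Finset.range (n₂ + 1),
        (P ((a.1 : ℤ), (a.2 : ℤ))).adjoint ∘L P ((a.1 : ℤ) + d.1, (a.2 : ℤ) + d.2))
    (B M : Finset (ℕ × ℕ))
    (hM : ∀ i ∈ B, ∀ a : ℕ × ℕ, a.1 ≤ n₁ → a.2 ≤ n₂ → (i.1 + a.1, i.2 + a.2) ∈ M)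
    (v : ℕ × ℕ → H) :
    ∑ i ∈ B, ∑ j ∈ B,
        (⟪Q ((i.1 : ℤ) - (j.1 : ℤ), (i.2 : ℤ) - (j.2 : ℤ)) (v j), v i⟫_ℂ).re
      = ∑ k ∈ M, ‖toepApply2 P B v k‖ ^ 2 := by
  have key : ∀ i ∈ B, ∀ j ∈ B,
      (⟪Q ((i.1 : ℤ) - (j.1 : ℤ), (i.2 : ℤ) - (j.2 : ℤ)) (v j), v i⟫_ℂ).re
        = ∑ k ∈ M, (⟪Pd P k j (v j), Pd P k i (v i)⟫_ℂ).re := by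
    intro i hi j hj
    rw [hfact]
    rw [ContinuousLinearMap.sum_apply, sum_inner, Complex.re_sum]
    have hsub : Finset.image (fun a : ℕ × ℕ => (i.1 + a.1, i.2 + a.2))
        (Finset.range (n₁ + 1) ×ˢ Finset.range (n₂ + 1)) ⊆ M := by
      intro k hk
      simp only [Finset.mem_image] at hk
      obtain ⟨a, ha, rfl⟩ := hk
      simp only [Finset.mem_product, Finset.mem_range] at ha
      exact hM i hi a (by omega) (by omega)
    have hvanish : ∀ k ∈ M,
        k ∉ Finset.image (fun a : ℕ × ℕ => (i.1 + a.1, i.2 + a.2))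
          (Finset.range (n₁ + 1) ×ˢ Finset.range (n₂ + 1)) →
        (⟪Pd P k j (v j), Pd P k i (v i)⟫_ℂ).re = 0 := by
      intro k _ hknot
      have hz : Pd P k i = 0 := by
        apply hPsupp
        rintro ⟨h1, h2, h3, h4⟩
        apply hknot
        refine Finset.mem_image.mpr ⟨(k.1 - i.1, k.2 - i.2), ?_, ?_⟩
        · simp only [Finset.mem_product, Finset.mem_range]
          constructor <;> omega
        · ext <;> simp <;> omega
      rw [hz]
      simp
    rw [show (∑ k ∈ M, (⟪Pd P k j (v j), Pd P k i (v i)⟫_ℂ).re) =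
        ∑ k ∈ Finset.image (fun a : ℕ × ℕ => (i.1 + a.1, i.2 + a.2))
          (Finset.range (n₁ + 1) ×ˢ Finset.range (n₂ + 1)),
          (⟪Pd P k j (v j), Pd P k i (v i)⟫_ℂ).re from
      (Finset.sum_subset hsub hvanish).symm]
    rw [Finset.sum_image (by
      intro a _ b _ hab
      simp only [Prod.mk.injEq] at hab
      ext <;> omega)]
    refine Finset.sum_congr rfl fun a _ => ?_
    rw [ContinuousLinearMap.comp_apply, ContinuousLinearMap.adjoint_inner_left]
    have h1 : ((↑(i.1 + a.1) : ℤ) - ↑j.1, (↑(i.2 + a.2) : ℤ) - ↑j.2)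
        = ((a.1 : ℤ) + ((i.1 : ℤ) - ↑j.1), (a.2 : ℤ) + ((i.2 : ℤ) - ↑j.2)) := by
      simp only [Prod.mk.injEq]; constructor <;> push_cast <;> ring
    have h2 : ((↑(i.1 + a.1) : ℤ) - ↑i.1, (↑(i.2 + a.2) : ℤ) - ↑i.2)
        = ((a.1 : ℤ), (a.2 : ℤ)) := by
      simp only [Prod.mk.injEq]; constructor <;> push_cast <;> ring
    simp only [Pd, h1, h2]
  calc ∑ i ∈ B, ∑ j ∈ B,
        (⟪Q ((i.1 : ℤ) - (j.1 : ℤ), (i.2 : ℤ) - (j.2 : ℤ)) (v j), v i⟫_ℂ).re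
      = ∑ i ∈ B, ∑ j ∈ B, ∑ k ∈ M, (⟪Pd P k j (v j), Pd P k i (v i)⟫_ℂ).re :=
        Finset.sum_congr rfl fun i hi => Finset.sum_congr rfl fun j hj => key i hi j hj
    _ = ∑ i ∈ B, ∑ k ∈ M, ∑ j ∈ B, (⟪Pd P k j (v j), Pd P k i (v i)⟫_ℂ).re :=
        Finset.sum_congr rfl fun i _ => Finset.sum_comm
    _ = ∑ k ∈ M, ∑ i ∈ B, ∑ j ∈ B, (⟪Pd P k j (v j), Pd P k i (v i)⟫_ℂ).re :=
        Finset.sum_comm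
    _ = ∑ k ∈ M, ‖toepApply2 P B v k‖ ^ 2 :=
        Finset.sum_congr rfl fun k _ => by
          rw [toepApply2_def, norm_sum_sq]

set_option linter.unusedSectionVars false in
lemma toepQF2_expand (n₁ n₂ : ℕ) (Q P : ℤ × ℤ → H →L[ℂ] H)
    (hPsupp : ∀ a : ℤ × ℤ,
      ¬(0 ≤ a.1 ∧ a.1 ≤ (n₁ : ℤ) ∧ 0 ≤ a.2 ∧ a.2 ≤ (n₂ : ℤ)) → P a = 0)
    (hfact : ∀ d : ℤ × ℤ,
      Q d = ∑ a ∈ Finset.range (n₁ + 1) ×ˢ Finset.range (n₂ + 1),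
        (P ((a.1 : ℤ), (a.2 : ℤ))).adjoint ∘L P ((a.1 : ℤ) + d.1, (a.2 : ℤ) + d.2))
    (N : ℕ) (M : Finset (ℕ × ℕ))
    (hM : ∀ i ∈ box2 N, ∀ a : ℕ × ℕ, a.1 ≤ n₁ → a.2 ≤ n₂ → (i.1 + a.1, i.2 + a.2) ∈ M)
    (v : ℕ × ℕ → H) :
    toepQF2 Q N v = ∑ k ∈ M, ‖toepApply2 P (box2 N) v k‖ ^ 2 :=
  toepQF_expand n₁ n₂ Q P hPsupp hfact (box2 N) M hM v

set_option linter.unusedSectionVars false in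
lemma toepApply_congr {P : ℤ × ℤ → H →L[ℂ] H} {B : Finset (ℕ × ℕ)} {v w : ℕ × ℕ → H}
    {k : ℕ × ℕ} (h : ∀ j ∈ B, Pd P k j ≠ 0 → v j = w j) :
    toepApply2 P B v k = toepApply2 P B w k := by
  rw [toepApply2_def, toepApply2_def]
  refine Finset.sum_congr rfl fun j hj => ?_
  by_cases h0 : Pd P k j = 0
  · rw [h0]; simp
  · rw [h j hj h0]

set_option linter.unusedSectionVars false in
lemma toepApply_zero {P : ℤ × ℤ → H →L[ℂ] H} {B : Finset (ℕ × ℕ)} {v : ℕ × ℕ → H}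
    {k : ℕ × ℕ} (h : ∀ j ∈ B, Pd P k j = 0) :
    toepApply2 P B v k = 0 := by
  rw [toepApply2_def]
  refine Finset.sum_eq_zero fun j hj => by rw [h j hj]; simp

set_option linter.unusedSectionVars false in
lemma toepApply_restrict {P : ℤ × ℤ → H →L[ℂ] H} {B C : Finset (ℕ × ℕ)}
    (hCB : C ⊆ B) {v : ℕ × ℕ → H} (hv : ∀ p ∉ C, v p = 0) (k : ℕ × ℕ) :
    toepApply2 P B v k = toepApply2 P C v k :=
  (Finset.sum_subset hCB fun j _ hj' => by rw [hv j hj', map_zero]).symm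

set_option linter.unusedSectionVars false in
lemma toepApply_sub {P : ℤ × ℤ → H →L[ℂ] H} {B : Finset (ℕ × ℕ)} (v g : ℕ × ℕ → H)
    (k : ℕ × ℕ) :
    toepApply2 P B (fun p => v p - g p) k = toepApply2 P B v k - toepApply2 P B g k := by
  simp only [toepApply2_def, map_sub, Finset.sum_sub_distrib]

set_option linter.unusedSectionVars false in
lemma toepApply_eq_of_downClosed {n₁ n₂ : ℕ} {P : ℤ × ℤ → H →L[ℂ] H}
    (hPsupp : ∀ a : ℤ × ℤ,
      ¬(0 ≤ a.1 ∧ a.1 ≤ (n₁ : ℤ) ∧ 0 ≤ a.2 ∧ a.2 ≤ (n₂ : ℤ)) → P a = 0)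
    {Λ B : Finset (ℕ × ℕ)} (hdc : DownClosed Λ) {v : ℕ × ℕ → H}
    (hv : ∀ p ∉ B, v p = 0) {k : ℕ × ℕ} (hk : k ∈ Λ) :
    toepApply2 P B v k = toepApply2 P Λ v k := by
  classical
  have h1 : toepApply2 P B v k = ∑ j ∈ B ∩ Λ, Pd P k j (v j) := by
    rw [toepApply2_def]
    refine (Finset.sum_subset Finset.inter_subset_left fun j hj hj' => ?_).symm
    have hjΛ : j ∉ Λ := fun h => hj' (Finset.mem_inter.mpr ⟨hj, h⟩)
    have hz : Pd P k j = 0 := by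
      refine Pd_eq_zero hPsupp fun hc => hjΛ (hdc k hk j hc.1 hc.2.2.1)
    rw [hz]; simp
  have h2 : toepApply2 P Λ v k = ∑ j ∈ Λ ∩ B, Pd P k j (v j) := by
    rw [toepApply2_def]
    refine (Finset.sum_subset Finset.inter_subset_left fun j hj hj' => ?_).symm
    rw [hv j (fun h => hj' (Finset.mem_inter.mpr ⟨hj, h⟩)), map_zero]
  rw [h1, h2, Finset.inter_comm]

set_option linter.unusedSectionVars false in
lemma schurQF2_congr {Λ : Finset (ℕ × ℕ)} (S : ℕ × ℕ → ℕ × ℕ → H →L[ℂ] H)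
    {v w : ℕ × ℕ → H} (h : ∀ p ∈ Λ, v p = w p) :
    schurQF2 Λ S v = schurQF2 Λ S w := by
  unfold schurQF2
  exact Finset.sum_congr rfl fun i hi => Finset.sum_congr rfl fun j hj => by
    rw [h i hi, h j hj]

/-- The explicit candidate for the Schur complement: `(Eop P Λ)_{a b} = ∑_{k∈Λ} P_{k-a}^* P_{k-b}`. -/
noncomputable def Eop (P : ℤ × ℤ → H →L[ℂ] H) (Λ : Finset (ℕ × ℕ)) (a b : ℕ × ℕ) : H →L[ℂ] H :=
  ∑ k ∈ Λ, (Pd P k a).adjoint ∘L Pd P k b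

lemma adjoint_sum {ι : Type*} (s : Finset ι) (f : ι → H →L[ℂ] H) :
    (∑ k ∈ s, f k).adjoint = ∑ k ∈ s, (f k).adjoint := by
  rw [← ContinuousLinearMap.star_eq_adjoint, star_sum]
  exact Finset.sum_congr rfl fun k _ => ContinuousLinearMap.star_eq_adjoint (f k)

lemma Eop_adjoint (P : ℤ × ℤ → H →L[ℂ] H) (Λ : Finset (ℕ × ℕ)) (a b : ℕ × ℕ) :
    (Eop P Λ a b).adjoint = Eop P Λ b a := by
  unfold Eop
  rw [adjoint_sum]
  refine Finset.sum_congr rfl fun k _ => ?_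
  rw [ContinuousLinearMap.adjoint_comp, ContinuousLinearMap.adjoint_adjoint]

lemma Eop_zero {n₁ n₂ : ℕ} {P : ℤ × ℤ → H →L[ℂ] H}
    (hPsupp : ∀ a : ℤ × ℤ,
      ¬(0 ≤ a.1 ∧ a.1 ≤ (n₁ : ℤ) ∧ 0 ≤ a.2 ∧ a.2 ≤ (n₂ : ℤ)) → P a = 0)
    {Λ : Finset (ℕ × ℕ)} (hdc : DownClosed Λ) (a b : ℕ × ℕ)
    (h : a ∉ Λ ∨ b ∉ Λ) : Eop P Λ a b = 0 := by
  unfold Eop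
  refine Finset.sum_eq_zero fun k hk => ?_
  rcases h with h | h
  · have hz : Pd P k a = 0 :=
      Pd_eq_zero hPsupp fun hc => h (hdc k hk a hc.1 hc.2.2.1)
    rw [hz]; simp
  · have hz : Pd P k b = 0 :=
      Pd_eq_zero hPsupp fun hc => h (hdc k hk b hc.1 hc.2.2.1)
    rw [hz]; simp

set_option linter.unusedSectionVars false in
lemma schurQF_E (P : ℤ × ℤ → H →L[ℂ] H) (Λ : Finset (ℕ × ℕ)) (v : ℕ × ℕ → H) :
    schurQF2 Λ (Eop P Λ) v = ∑ k ∈ Λ, ‖toepApply2 P Λ v k‖ ^ 2 := by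
  have key : ∀ i j : ℕ × ℕ,
      (⟪Eop P Λ i j (v j), v i⟫_ℂ).re
        = ∑ k ∈ Λ, (⟪Pd P k j (v j), Pd P k i (v i)⟫_ℂ).re := by
    intro i j
    unfold Eop
    rw [ContinuousLinearMap.sum_apply, sum_inner, Complex.re_sum]
    refine Finset.sum_congr rfl fun k _ => ?_
    rw [ContinuousLinearMap.comp_apply, ContinuousLinearMap.adjoint_inner_left]
  unfold schurQF2
  calc ∑ i ∈ Λ, ∑ j ∈ Λ, (⟪Eop P Λ i j (v j), v i⟫_ℂ).re
      = ∑ i ∈ Λ, ∑ j ∈ Λ, ∑ k ∈ Λ, (⟪Pd P k j (v j), Pd P k i (v i)⟫_ℂ).re :=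
        Finset.sum_congr rfl fun i _ => Finset.sum_congr rfl fun j _ => key i j
    _ = ∑ i ∈ Λ, ∑ k ∈ Λ, ∑ j ∈ Λ, (⟪Pd P k j (v j), Pd P k i (v i)⟫_ℂ).re :=
        Finset.sum_congr rfl fun i _ => Finset.sum_comm
    _ = ∑ k ∈ Λ, ∑ i ∈ Λ, ∑ j ∈ Λ, (⟪Pd P k j (v j), Pd P k i (v i)⟫_ℂ).re :=
        Finset.sum_comm
    _ = ∑ k ∈ Λ, ‖toepApply2 P Λ v k‖ ^ 2 :=
        Finset.sum_congr rfl fun k _ => by rw [toepApply2_def, norm_sum_sq]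

set_option linter.unusedSectionVars false in
lemma schurQF2_sub (Λ : Finset (ℕ × ℕ)) (S T : ℕ × ℕ → ℕ × ℕ → H →L[ℂ] H)
    (v : ℕ × ℕ → H) :
    schurQF2 Λ (fun i j => S i j - T i j) v = schurQF2 Λ S v - schurQF2 Λ T v := by
  unfold schurQF2
  rw [← Finset.sum_sub_distrib]
  refine Finset.sum_congr rfl fun i _ => ?_
  rw [← Finset.sum_sub_distrib]
  refine Finset.sum_congr rfl fun j _ => ?_
  rw [ContinuousLinearMap.sub_apply, inner_sub_left, Complex.sub_re]

set_option linter.unusedSectionVars false in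
lemma entries_eq (Λ : Finset (ℕ × ℕ)) (S T : ℕ × ℕ → ℕ × ℕ → H →L[ℂ] H)
    (hS0 : ∀ i j, i ∉ Λ ∨ j ∉ Λ → S i j = 0)
    (hT0 : ∀ i j, i ∉ Λ ∨ j ∉ Λ → T i j = 0)
    (hSadj : ∀ i j, (S i j).adjoint = S j i)
    (hTadj : ∀ i j, (T i j).adjoint = T j i)
    (hqf : ∀ v, schurQF2 Λ S v = schurQF2 Λ T v) :
    ∀ a b, S a b = T a b := by
  classical
  set D : ℕ × ℕ → ℕ × ℕ → H →L[ℂ] H := fun i j => S i j - T i j with hD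
  have hDqf : ∀ v, schurQF2 Λ D v = 0 := fun v => by
    rw [hD, schurQF2_sub, hqf, sub_self]
  have hDadj : ∀ i j, (D i j).adjoint = D j i := by
    intro i j
    simp only [hD, ← ContinuousLinearMap.star_eq_adjoint, star_sub]
    rw [ContinuousLinearMap.star_eq_adjoint, ContinuousLinearMap.star_eq_adjoint,
      hSadj, hTadj]
  suffices hDz : ∀ a b, D a b = 0 by
    intro a b
    have := hDz a b
    rw [hD] at this
    exact sub_eq_zero.mp this
  -- diagonal entries vanish
  have hdiag : ∀ c ∈ Λ, D c c = 0 := by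
    intro c hc
    have hre : ∀ x : H, (⟪D c c x, x⟫_ℂ).re = 0 := by
      intro x
      have h0 := hDqf (fun p => if p = c then x else 0)
      unfold schurQF2 at h0
      rw [Finset.sum_eq_single_of_mem c hc (fun i _ hic => by
        refine Finset.sum_eq_zero fun j _ => ?_
        simp [if_neg hic])] at h0
      rw [Finset.sum_eq_single_of_mem c hc (fun j _ hjc => by
        simp [if_neg hjc])] at h0
      simpa using h0
    have hz : ∀ x : H, ⟪D c c x, x⟫_ℂ = 0 := by
      intro x
      have hconj : ⟪D c c x, x⟫_ℂ = (starRingEnd ℂ) ⟪D c c x, x⟫_ℂ := by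
        calc ⟪D c c x, x⟫_ℂ = ⟪(D c c).adjoint x, x⟫_ℂ := by rw [hDadj c c]
          _ = ⟪x, D c c x⟫_ℂ := ContinuousLinearMap.adjoint_inner_left _ _ _
          _ = (starRingEnd ℂ) ⟪D c c x, x⟫_ℂ := (inner_conj_symm _ _).symm
      have him : (⟪D c c x, x⟫_ℂ).im = 0 := by
        have := congrArg Complex.im hconj
        simp only [Complex.conj_im] at this
        linarith
      exact Complex.ext (by simpa using hre x) (by simpa using him)
    have hlin : ((D c c : H →L[ℂ] H) : H →ₗ[ℂ] H) = 0 :=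
      (inner_map_self_eq_zero _).mp fun x => hz x
    exact ContinuousLinearMap.coe_injective (by simpa using hlin)
  -- off-diagonal
  have hoff : ∀ a ∈ Λ, ∀ b ∈ Λ, a ≠ b → D a b = 0 := by
    intro a ha b hb hab
    have key : ∀ y x : H, (⟪D a b y, x⟫_ℂ).re = 0 := by
      intro y x
      set v : ℕ × ℕ → H := fun p => if p = a then x else if p = b then y else 0 with hv
      have h0 := hDqf v
      unfold schurQF2 at h0
      have hpair : ({a, b} : Finset (ℕ × ℕ)) ⊆ Λ := by
        intro p hp
        simp only [Finset.mem_insert, Finset.mem_singleton] at hp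
        rcases hp with rfl | rfl <;> assumption
      have hvz : ∀ p, p ∉ ({a, b} : Finset (ℕ × ℕ)) → v p = 0 := by
        intro p hp
        simp only [Finset.mem_insert, Finset.mem_singleton, not_or] at hp
        simp [hv, hp.1, hp.2]
      have houter : ∑ i ∈ Λ, ∑ j ∈ Λ, (⟪D i j (v j), v i⟫_ℂ).re
          = ∑ i ∈ ({a, b} : Finset (ℕ × ℕ)), ∑ j ∈ ({a, b} : Finset (ℕ × ℕ)),
              (⟪D i j (v j), v i⟫_ℂ).re := by
        have e1 : ∀ i ∈ Λ, ∑ j ∈ Λ, (⟪D i j (v j), v i⟫_ℂ).re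
            = ∑ j ∈ ({a, b} : Finset (ℕ × ℕ)), (⟪D i j (v j), v i⟫_ℂ).re := by
          intro i _
          refine (Finset.sum_subset hpair fun j _ hj' => ?_).symm
          rw [hvz j hj', map_zero]
          simp
        calc ∑ i ∈ Λ, ∑ j ∈ Λ, (⟪D i j (v j), v i⟫_ℂ).re
            = ∑ i ∈ Λ, ∑ j ∈ ({a, b} : Finset (ℕ × ℕ)), (⟪D i j (v j), v i⟫_ℂ).re :=
              Finset.sum_congr rfl e1
          _ = ∑ i ∈ ({a, b} : Finset (ℕ × ℕ)), ∑ j ∈ ({a, b} : Finset (ℕ × ℕ)),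
                (⟪D i j (v j), v i⟫_ℂ).re := by
              refine (Finset.sum_subset hpair fun i _ hi' => ?_).symm
              rw [hvz i hi']
              simp
      rw [houter] at h0
      rw [Finset.sum_pair hab] at h0
      rw [Finset.sum_pair hab, Finset.sum_pair hab] at h0
      have hva : v a = x := by simp [hv]
      have hvb : v b = y := by simp [hv, hab.symm]
      rw [hva, hvb] at h0
      rw [hdiag a ha, hdiag b hb] at h0
      simp only [ContinuousLinearMap.zero_apply, inner_zero_left, Complex.zero_re] at h0
      -- h0 : (⟪D a b y, x⟫).re + (⟪D b a x, y⟫).re = 0 (up to zeros)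
      have hba : (⟪D b a x, y⟫_ℂ).re = (⟪D a b y, x⟫_ℂ).re := by
        have h1 : ⟪D b a x, y⟫_ℂ = ⟪x, D a b y⟫_ℂ := by
          rw [← hDadj a b]
          exact ContinuousLinearMap.adjoint_inner_left _ _ _
        have h2 : ⟪x, D a b y⟫_ℂ = (starRingEnd ℂ) ⟪D a b y, x⟫_ℂ :=
          (inner_conj_symm _ _).symm
        rw [h1, h2, Complex.conj_re]
      rw [hba] at h0
      linarith
    refine ContinuousLinearMap.ext fun y => ?_
    have := key y (D a b y)
    rw [← RCLike.re_to_complex, inner_self_eq_norm_sq] at this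
    simpa using this
  intro a b
  by_cases ha : a ∈ Λ
  · by_cases hb : b ∈ Λ
    · by_cases hab : a = b
      · subst hab; exact hdiag a ha
      · exact hoff a ha b hb hab
    · simp only [hD]; rw [hS0 a b (Or.inr hb), hT0 a b (Or.inr hb), sub_zero]
  · simp only [hD]; rw [hS0 a b (Or.inl ha), hT0 a b (Or.inl ha), sub_zero]

set_option linter.unusedSectionVars false in
lemma schur_eq_Eop (n₁ n₂ : ℕ) (Q P : ℤ × ℤ → H →L[ℂ] H)
    (hPsupp : ∀ a : ℤ × ℤ,
      ¬(0 ≤ a.1 ∧ a.1 ≤ (n₁ : ℤ) ∧ 0 ≤ a.2 ∧ a.2 ≤ (n₂ : ℤ)) → P a = 0)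
    (hfact : ∀ d : ℤ × ℤ,
      Q d = ∑ a ∈ Finset.range (n₁ + 1) ×ˢ Finset.range (n₂ + 1),
        (P ((a.1 : ℤ), (a.2 : ℤ))).adjoint ∘L P ((a.1 : ℤ) + d.1, (a.2 : ℤ) + d.2))
    (Λ : Finset (ℕ × ℕ)) (hdc : DownClosed Λ)
    (hΛK : ∀ p ∈ Λ, p.1 ≤ n₁ ∧ p.2 ≤ n₂)
    (houter : OuterCond2 P Λ)
    (S : ℕ × ℕ → ℕ × ℕ → H →L[ℂ] H) (hS : IsSchurToep2 Q Λ S) :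
    ∀ a b, S a b = Eop P Λ a b := by
  classical
  obtain ⟨hS0, hSadj, hSpos, hSdom, hSmax⟩ := hS
  have hE0 : ∀ i j, i ∉ Λ ∨ j ∉ Λ → Eop P Λ i j = 0 := fun i j h =>
    Eop_zero hPsupp hdc i j h
  have hEadj : ∀ i j, (Eop P Λ i j).adjoint = Eop P Λ j i := fun i j =>
    Eop_adjoint P Λ i j
  have hEqf : ∀ v : ℕ × ℕ → H,
      schurQF2 Λ (Eop P Λ) v = ∑ k ∈ Λ, ‖toepApply2 P Λ v k‖ ^ 2 :=
    schurQF_E P Λ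
  have hEpos : ∀ v, 0 ≤ schurQF2 Λ (Eop P Λ) v := by
    intro v
    rw [hEqf]
    exact Finset.sum_nonneg fun k _ => by positivity
  -- domination of the explicit form by the Toeplitz quadratic form
  have hEdom : ∀ (N : ℕ) (v : ℕ × ℕ → H), (∀ p, p ∉ box2 N → v p = 0) →
      schurQF2 Λ (Eop P Λ) v ≤ toepQF2 Q N v := by
    intro N v hv
    rw [hEqf]
    have hM : ∀ i ∈ box2 N, ∀ a : ℕ × ℕ, a.1 ≤ n₁ → a.2 ≤ n₂ →
        (i.1 + a.1, i.2 + a.2) ∈ box2 (N + n₁ + n₂ + 1) ∪ Λ := by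
      intro i hi a ha1 ha2
      rw [mem_box2] at hi
      exact Finset.mem_union_left _ (mem_box2.mpr ⟨by omega, by omega⟩)
    rw [toepQF2_expand n₁ n₂ Q P hPsupp hfact N (box2 (N + n₁ + n₂ + 1) ∪ Λ) hM v]
    have heq : ∀ k ∈ Λ, ‖toepApply2 P Λ v k‖ ^ 2 = ‖toepApply2 P (box2 N) v k‖ ^ 2 :=
      fun k hk => by rw [toepApply_eq_of_downClosed hPsupp hdc hv hk]
    calc ∑ k ∈ Λ, ‖toepApply2 P Λ v k‖ ^ 2
        = ∑ k ∈ Λ, ‖toepApply2 P (box2 N) v k‖ ^ 2 := Finset.sum_congr rfl heq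
      _ ≤ ∑ k ∈ box2 (N + n₁ + n₂ + 1) ∪ Λ, ‖toepApply2 P (box2 N) v k‖ ^ 2 :=
          Finset.sum_le_sum_of_subset_of_nonneg Finset.subset_union_right
            fun _ _ _ => by positivity
  have hdir1 : ∀ v, schurQF2 Λ (Eop P Λ) v ≤ schurQF2 Λ S v :=
    hSmax (Eop P Λ) hE0 hEadj hEpos hEdom
  -- the opposite inequality, using the outer range condition
  have hdir2 : ∀ v, schurQF2 Λ S v ≤ schurQF2 Λ (Eop P Λ) v := by
    intro v
    set v' : ℕ × ℕ → H := fun p => if p ∈ Λ then v p else 0 with hv'def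
    have hv'supp : ∀ p, p ∉ Λ → v' p = 0 := fun p hp => if_neg hp
    have hvv' : ∀ p ∈ Λ, v p = v' p := fun p hp => (if_pos hp).symm
    rw [schurQF2_congr S hvv', schurQF2_congr (Eop P Λ) hvv', hEqf]
    refine le_of_forall_pos_le_add fun ε hε => ?_
    obtain ⟨N, g, hg, hsum⟩ := houter v' hv'supp ε hε
    set N' := N + n₁ + n₂ + 2 with hN'def
    set w : ℕ × ℕ → H := fun p => v' p - g p with hwdef
    have hΛbox : Λ ⊆ box2 N' := by
      intro p hp
      have := hΛK p hp
      exact mem_box2.mpr ⟨by omega, by omega⟩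
    have hNbox : box2 N ⊆ box2 N' := by
      intro p hp
      rw [mem_box2] at hp ⊢
      omega
    have hwsupp : ∀ p, p ∉ box2 N' → w p = 0 := by
      intro p hp
      have h1 : v' p = 0 := hv'supp p fun h => hp (hΛbox h)
      have h2 : g p = 0 := hg p (Or.inr fun h => hp (hNbox h))
      simp [hwdef, h1, h2]
    have e3 : schurQF2 Λ S v' = schurQF2 Λ S w := by
      refine schurQF2_congr S fun p hp => ?_
      simp [hwdef, hg p (Or.inl hp)]
    have e4 := hSdom N' w hwsupp
    set M := box2 (N' + n₁ + n₂ + 1) with hMdef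
    have hM : ∀ i ∈ box2 N', ∀ a : ℕ × ℕ, a.1 ≤ n₁ → a.2 ≤ n₂ →
        (i.1 + a.1, i.2 + a.2) ∈ M := by
      intro i hi a ha1 ha2
      rw [mem_box2] at hi
      exact mem_box2.mpr ⟨by omega, by omega⟩
    have htq : toepQF2 Q N' w = ∑ k ∈ M, ‖toepApply2 P (box2 N') w k‖ ^ 2 :=
      toepQF2_expand n₁ n₂ Q P hPsupp hfact N' M hM w
    have hΛM : Λ ⊆ M := by
      intro p hp
      have := hΛK p hp
      exact mem_box2.mpr ⟨by omega, by omega⟩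
    have hsplit : ∑ k ∈ M, ‖toepApply2 P (box2 N') w k‖ ^ 2
        = ∑ k ∈ M \ Λ, ‖toepApply2 P (box2 N') w k‖ ^ 2
          + ∑ k ∈ Λ, ‖toepApply2 P (box2 N') w k‖ ^ 2 :=
      (Finset.sum_sdiff hΛM).symm
    have hΛpart : ∀ k ∈ Λ, toepApply2 P (box2 N') w k = toepApply2 P Λ v' k := by
      intro k hk
      have step1 : toepApply2 P (box2 N') w k = toepApply2 P (box2 N') v' k := by
        refine toepApply_congr fun j _ hPj => ?_
        have hle : j.1 ≤ k.1 ∧ j.2 ≤ k.2 := by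
          by_contra hcon
          exact hPj (Pd_eq_zero hPsupp fun hc => hcon ⟨hc.1, hc.2.2.1⟩)
        have hjΛ : j ∈ Λ := hdc k hk j hle.1 hle.2
        simp [hwdef, hg j (Or.inl hjΛ)]
      rw [step1]
      exact toepApply_eq_of_downClosed hPsupp hdc
        (fun p hp => hv'supp p fun h => hp (hΛbox h)) hk
    have hrest : ∀ k, toepApply2 P (box2 N') w k
        = toepApply2 P Λ v' k - toepApply2 P (box2 N) g k := by
      intro k
      rw [hwdef, toepApply_sub, toepApply_restrict hΛbox hv'supp k,
        toepApply_restrict hNbox (fun p hp => hg p (Or.inr hp)) k]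
    -- tail estimate via the outer condition
    set F : ℕ × ℕ → ℝ := fun i => if i ∈ Λ then (0 : ℝ)
      else ‖toepApply2 P Λ v' i - toepApply2 P (box2 N) g i‖ ^ 2 with hFdef
    have hFsupp : ∀ b, b ∉ M \ Λ → F b = 0 := by
      intro b hb
      by_cases hbΛ : b ∈ Λ
      · simp [hFdef, hbΛ]
      · have hbM : b ∉ M := fun h => hb (Finset.mem_sdiff.mpr ⟨h, hbΛ⟩)
        have hbig : ¬(b.1 < N' + n₁ + n₂ + 1 ∧ b.2 < N' + n₁ + n₂ + 1) := by
          rw [← mem_box2]; exact hbM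
        have z1 : toepApply2 P Λ v' b = 0 := by
          refine toepApply_zero fun j hj => Pd_eq_zero hPsupp fun hc => ?_
          have := hΛK j hj
          omega
        have z2 : toepApply2 P (box2 N) g b = 0 := by
          refine toepApply_zero fun j hj => Pd_eq_zero hPsupp fun hc => ?_
          rw [mem_box2] at hj
          omega
        simp [hFdef, hbΛ, z1, z2]
    have htail : ∑ k ∈ M \ Λ, ‖toepApply2 P (box2 N') w k‖ ^ 2 < ε := by
      have heq : ∑ k ∈ M \ Λ, ‖toepApply2 P (box2 N') w k‖ ^ 2 = ∑ k ∈ M \ Λ, F k := by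
        refine Finset.sum_congr rfl fun k hk => ?_
        have hkΛ : k ∉ Λ := (Finset.mem_sdiff.mp hk).2
        rw [hrest k, hFdef]
        simp [hkΛ]
      rw [heq, ← tsum_eq_sum (L := SummationFilter.unconditional _) hFsupp]
      exact hsum
    calc schurQF2 Λ S v' = schurQF2 Λ S w := e3
      _ ≤ toepQF2 Q N' w := e4
      _ = ∑ k ∈ M \ Λ, ‖toepApply2 P (box2 N') w k‖ ^ 2
          + ∑ k ∈ Λ, ‖toepApply2 P (box2 N') w k‖ ^ 2 := by rw [htq, hsplit]
      _ = ∑ k ∈ M \ Λ, ‖toepApply2 P (box2 N') w k‖ ^ 2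
          + ∑ k ∈ Λ, ‖toepApply2 P Λ v' k‖ ^ 2 := by
            congr 1
            exact Finset.sum_congr rfl fun k hk => by rw [hΛpart k hk]
      _ ≤ ∑ k ∈ Λ, ‖toepApply2 P Λ v' k‖ ^ 2 + ε := by linarith [htail]
  exact entries_eq Λ S (Eop P Λ) hS0 hE0 hSadj hEadj
    (fun v => le_antisymm (hdir2 v) (hdir1 v))

/-- Two-variable Schur complement identity implied by an outer factorization:
`S(T_Q; K∖{(n₁,n₂)}) = S₁ + S₂ - S₀`. -/
theorem two_variable_schur_identity (n₁ n₂ : ℕ) (Q : ℤ × ℤ → H →L[ℂ] H)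
    (hQ : ToepPos2 Q)
    (P : ℤ × ℤ → H →L[ℂ] H)
    (hPsupp : ∀ a : ℤ × ℤ,
      ¬(0 ≤ a.1 ∧ a.1 ≤ (n₁ : ℤ) ∧ 0 ≤ a.2 ∧ a.2 ≤ (n₂ : ℤ)) → P a = 0)
    (hfact : ∀ d : ℤ × ℤ,
      Q d = ∑ a ∈ Finset.range (n₁ + 1) ×ˢ Finset.range (n₂ + 1),
        (P ((a.1 : ℤ), (a.2 : ℤ))).adjoint ∘L P ((a.1 : ℤ) + d.1, (a.2 : ℤ) + d.2))
    (houter₀ : OuterCond2 P (Finset.range n₁ ×ˢ Finset.range n₂))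
    (houter₁ : OuterCond2 P (Finset.range n₁ ×ˢ Finset.range (n₂ + 1)))
    (houter₂ : OuterCond2 P (Finset.range (n₁ + 1) ×ˢ Finset.range n₂))
    (houter₃ : OuterCond2 P
      ((Finset.range (n₁ + 1) ×ˢ Finset.range (n₂ + 1)).erase (n₁, n₂)))
    (houter₄ : OuterCond2 P (Finset.range (n₁ + 1) ×ˢ Finset.range (n₂ + 1)))
    (S1 S2 S0 SKn : ℕ × ℕ → ℕ × ℕ → H →L[ℂ] H)
    (hS1 : IsSchurToep2 Q (Finset.range n₁ ×ˢ Finset.range (n₂ + 1)) S1)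
    (hS2 : IsSchurToep2 Q (Finset.range (n₁ + 1) ×ˢ Finset.range n₂) S2)
    (hS0 : IsSchurToep2 Q (Finset.range n₁ ×ˢ Finset.range n₂) S0)
    (hSKn : IsSchurToep2 Q
      ((Finset.range (n₁ + 1) ×ˢ Finset.range (n₂ + 1)).erase (n₁, n₂)) SKn) :
    ∀ a b : ℕ × ℕ, SKn a b = S1 a b + S2 a b - S0 a b := by
  intro a b
  have hdcbox : ∀ m k : ℕ, DownClosed (Finset.range m ×ˢ Finset.range k) := by
    intro m k p hp q h1 h2
    simp only [Finset.mem_product, Finset.mem_range] at hp ⊢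
    omega
  have hdc3 : DownClosed
      ((Finset.range (n₁ + 1) ×ˢ Finset.range (n₂ + 1)).erase (n₁, n₂)) := by
    intro p hp q h1 h2
    simp only [Finset.mem_erase, Finset.mem_product, Finset.mem_range, Ne,
      Prod.ext_iff] at hp ⊢
    omega
  have hk1 : ∀ p ∈ Finset.range n₁ ×ˢ Finset.range (n₂ + 1), p.1 ≤ n₁ ∧ p.2 ≤ n₂ := by
    intro p hp
    simp only [Finset.mem_product, Finset.mem_range] at hp
    omega
  have hk2 : ∀ p ∈ Finset.range (n₁ + 1) ×ˢ Finset.range n₂, p.1 ≤ n₁ ∧ p.2 ≤ n₂ := by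
    intro p hp
    simp only [Finset.mem_product, Finset.mem_range] at hp
    omega
  have hk0 : ∀ p ∈ Finset.range n₁ ×ˢ Finset.range n₂, p.1 ≤ n₁ ∧ p.2 ≤ n₂ := by
    intro p hp
    simp only [Finset.mem_product, Finset.mem_range] at hp
    omega
  have hk3 : ∀ p ∈ (Finset.range (n₁ + 1) ×ˢ Finset.range (n₂ + 1)).erase (n₁, n₂),
      p.1 ≤ n₁ ∧ p.2 ≤ n₂ := by
    intro p hp
    simp only [Finset.mem_erase, Finset.mem_product, Finset.mem_range] at hp
    omega
  have h1 := schur_eq_Eop n₁ n₂ Q P hPsupp hfact _ (hdcbox n₁ (n₂ + 1)) hk1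
    houter₁ S1 hS1 a b
  have h2 := schur_eq_Eop n₁ n₂ Q P hPsupp hfact _ (hdcbox (n₁ + 1) n₂) hk2
    houter₂ S2 hS2 a b
  have h0 := schur_eq_Eop n₁ n₂ Q P hPsupp hfact _ (hdcbox n₁ n₂) hk0
    houter₀ S0 hS0 a b
  have h3 := schur_eq_Eop n₁ n₂ Q P hPsupp hfact _ hdc3 hk3
    houter₃ SKn hSKn a b
  rw [h1, h2, h0, h3]
  have hu : (Finset.range n₁ ×ˢ Finset.range (n₂ + 1))
      ∪ (Finset.range (n₁ + 1) ×ˢ Finset.range n₂)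
      = (Finset.range (n₁ + 1) ×ˢ Finset.range (n₂ + 1)).erase (n₁, n₂) := by
    ext p
    simp only [Finset.mem_union, Finset.mem_erase, Finset.mem_product,
      Finset.mem_range, Ne, Prod.ext_iff]
    omega
  have hi : (Finset.range n₁ ×ˢ Finset.range (n₂ + 1))
      ∩ (Finset.range (n₁ + 1) ×ˢ Finset.range n₂)
      = Finset.range n₁ ×ˢ Finset.range n₂ := by
    ext p
    simp only [Finset.mem_inter, Finset.mem_product, Finset.mem_range]
    omega
  have hsum := Finset.sum_union_inter
    (s₁ := Finset.range n₁ ×ˢ Finset.range (n₂ + 1))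
    (s₂ := Finset.range (n₁ + 1) ×ˢ Finset.range n₂)
    (f := fun k => (Pd P k a).adjoint ∘L Pd P k b)
  rw [hu, hi] at hsum
  unfold Eop
  rw [eq_sub_iff_add_eq]
  exact hsum

end
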